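/- Conservation of the spin scalar products: let x_i : ℝ → ℂ be functions with x_i(t) ≠ x_j(t) for i ≠ j and all t, and let a_i, b_i : ℝ → ℂˡ be differentiable functions satisfying for all t the spin equations of motion ȧ_i = −Σ_{j≠i} a_j·(b_j·a_i)/(x_i−x_j)² and ḃ_i = Σ_{j≠i} b_j·(b_i·a_j)/(x_i−x_j)². Then for each i the function t ↦ b_i(t)·a_i(t) is constant. -/

import Mathlib

open Finset

/-- Conservation of the spin scalar products `bᵢ·aᵢ` under the rational spin
equations of motion. -/
theorem spin_products_conserved (N l : ℕ)
    (x : Fin N → ℝ → ℂ) (a b : Fin N → ℝ → Fin l → ℂ)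
    (hxne : ∀ (t : ℝ) (i j : Fin N), i ≠ j → x i t ≠ x j t)
    (ha : ∀ (i : Fin N) (t : ℝ), HasDerivAt (a i)
      (-∑ j ∈ Finset.univ.erase i,
        ((∑ α : Fin l, b j t α * a i t α) / (x i t - x j t) ^ 2) • a j t) t)
    (hb : ∀ (i : Fin N) (t : ℝ), HasDerivAt (b i)
      (∑ j ∈ Finset.univ.erase i,
        ((∑ α : Fin l, b i t α * a j t α) / (x i t - x j t) ^ 2) • b j t) t) :
    ∀ (i : Fin N) (t s : ℝ),
      (∑ α : Fin l, b i t α * a i t α) = ∑ α : Fin l, b i s α * a i s α := by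
  intro i t s
  have key : ∀ u : ℝ,
      HasDerivAt (fun r => ∑ α : Fin l, b i r α * a i r α) 0 u := by
    intro u
    have hA := hasDerivAt_pi.mp (ha i u)
    have hB := hasDerivAt_pi.mp (hb i u)
    have h1 : HasDerivAt (fun r => ∑ α : Fin l, b i r α * a i r α)
        (∑ α : Fin l,
          ((∑ j ∈ Finset.univ.erase i,
              ((∑ β : Fin l, b i u β * a j u β) / (x i u - x j u) ^ 2) • b j u) α
            * a i u α
          + b i u α *
            ((-∑ j ∈ Finset.univ.erase i,
              ((∑ β : Fin l, b j u β * a i u β) / (x i u - x j u) ^ 2) • a j u) α))) u :=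
      HasDerivAt.fun_sum fun α _ => (hB α).mul (hA α)
    convert h1 using 1
    simp only [Finset.sum_apply, Pi.smul_apply, Pi.neg_apply, smul_eq_mul, mul_neg]
    rw [Finset.sum_add_distrib, Finset.sum_neg_distrib]
    have L : ∑ α : Fin l, (∑ j ∈ Finset.univ.erase i,
          (∑ β : Fin l, b i u β * a j u β) / (x i u - x j u) ^ 2 * b j u α) * a i u α
        = ∑ j ∈ Finset.univ.erase i,
          (∑ β : Fin l, b i u β * a j u β) / (x i u - x j u) ^ 2
            * ∑ α : Fin l, b j u α * a i u α := by
      simp_rw [Finset.sum_mul, mul_assoc]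
      rw [Finset.sum_comm]
      simp_rw [← Finset.mul_sum]
    have R : ∑ α : Fin l, b i u α * (∑ j ∈ Finset.univ.erase i,
          (∑ β : Fin l, b j u β * a i u β) / (x i u - x j u) ^ 2 * a j u α)
        = ∑ j ∈ Finset.univ.erase i,
          (∑ β : Fin l, b j u β * a i u β) / (x i u - x j u) ^ 2
            * ∑ α : Fin l, b i u α * a j u α := by
      simp_rw [Finset.mul_sum]
      rw [Finset.sum_comm]
      refine Finset.sum_congr rfl fun j _ => ?_
      exact Finset.sum_congr rfl fun α _ => by ring
    rw [L, R]
    rw [eq_comm, add_neg_eq_zero]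
    exact Finset.sum_congr rfl fun j _ => by ring
  have hdiff : Differentiable ℝ (fun r => ∑ α : Fin l, b i r α * a i r α) :=
    fun u => (key u).differentiableAt
  have hd : ∀ u, deriv (fun r => ∑ α : Fin l, b i r α * a i r α) u = 0 :=
    fun u => (key u).deriv
  exact is_const_of_deriv_eq_zero hdiff hd t s
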